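/- Let n ≥ 2. For every column index k ∈ {0, …, 2^n − 1}, let k₀ = k − (k mod 2) (the index with last bit cleared). Then the k-th column of P is an eigenvector of B with eigenvalue 4·W(k₀)·(n − W(k₀)); that is, for all i ∈ {0, …, 2^n − 1}, Σ_{j=0}^{2^n−1} B_{ij}·P_{jk} = 4·W(k₀)·(n − W(k₀))·P_{ik}. -/

import Mathlib

/-- Hamming weight: number of 1's in the `n`-bit binary representation of `i`. -/
def hamW (n i : ℕ) : ℕ := ((Finset.range n).filter (fun p => i.testBit p)).card

/-- Hamming distance between the `n`-bit binary representations of `i` and `j`. -/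
def hamD (n i j : ℕ) : ℕ :=
  ((Finset.range n).filter (fun p => i.testBit p ≠ j.testBit p)).card

/-- Number of bit positions where `i` and `j` both have bit 1. -/
def hamC (n i j : ℕ) : ℕ :=
  ((Finset.range n).filter (fun p => i.testBit p ∧ j.testBit p)).card

/-- `F α = ((1+√2)^α − (1−√2)^α)/(2√2)` with integer powers. -/
noncomputable def Ffun (α : ℤ) : ℝ :=
  ((1 + Real.sqrt 2) ^ α - (1 - Real.sqrt 2) ^ α) / (2 * Real.sqrt 2)

/-- The matrix `B`. -/
noncomputable def Bmat (n : ℕ) : Matrix (Fin (2 ^ n)) (Fin (2 ^ n)) ℝ := fun i j =>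
  if i = j then
    (n : ℝ) * ((n : ℝ) - 1) + (1 / 2) * ((n : ℝ) - (2 * (hamW n i : ℝ) - (n : ℝ)) ^ 2)
  else
    (if hamD n i j = 1 then (n : ℝ) - 1 - 2 * (min (hamW n i) (hamW n j) : ℝ) else 0)
      - (if hamD n i j = 2 then 1 else 0)

/-- The matrix `P`: writing `i = i₀ + a` and `k = k₀ + b` with `a b` the least significant
bits, `P i k = (−1)^(c(i₀,k₀)) * F(d(i₀,k₀) − 1 + a + b)`. -/
noncomputable def Pmat (n : ℕ) : Matrix (Fin (2 ^ n)) (Fin (2 ^ n)) ℝ := fun i k =>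
  (-1 : ℝ) ^ hamC n ((i : ℕ) - (i : ℕ) % 2) ((k : ℕ) - (k : ℕ) % 2) *
    Ffun ((hamD n ((i : ℕ) - (i : ℕ) % 2) ((k : ℕ) - (k : ℕ) % 2) : ℤ) - 1
      + (i : ℕ) % 2 + (k : ℕ) % 2)

section EigenAux
open Finset

lemma tb_even_zero (x : ℕ) : (x - x % 2).testBit 0 = false := by
  rw [Nat.testBit_zero]
  have h := Nat.mod_two_eq_zero_or_one x
  have : (x - x % 2) % 2 = 0 := by omega
  simp [this]

lemma tb_even_succ (x q : ℕ) : (x - x % 2).testBit (q+1) = x.testBit (q+1) := by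
  have h1 : x - x % 2 = 2 * (x / 2) := by omega
  rw [Nat.testBit_succ, Nat.testBit_succ, h1, Nat.mul_div_cancel_left _ (by norm_num)]

lemma mod_two_eq_ite (x : ℕ) : x % 2 = if x.testBit 0 then 1 else 0 := by
  rw [Nat.testBit_zero]
  rcases Nat.mod_two_eq_zero_or_one x with h | h <;> simp [h]

lemma tb_xor_pow (i p q : ℕ) : (i ^^^ 2 ^ p).testBit q = if q = p then !(i.testBit q) else i.testBit q := by
  rw [Nat.testBit_xor, Nat.testBit_two_pow]
  by_cases h : q = p
  · simp [h]
  · simp [h, show ¬ p = q from fun hh => h hh.symm]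

lemma xor_mod_two (i p : ℕ) (hp : 1 ≤ p) : (i ^^^ 2 ^ p) % 2 = i % 2 := by
  have h : (i ^^^ 2 ^ p).testBit 0 = i.testBit 0 := by
    rw [tb_xor_pow, if_neg (by omega)]
  rw [mod_two_eq_ite, mod_two_eq_ite i, h]

lemma xor_pow_even (i p : ℕ) (hp : 1 ≤ p) :
    (i ^^^ 2 ^ p) - (i ^^^ 2 ^ p) % 2 = (i - i % 2) ^^^ 2 ^ p := by
  apply Nat.eq_of_testBit_eq
  intro q
  cases q with
  | zero => rw [tb_even_zero, tb_xor_pow, if_neg (by omega), tb_even_zero]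
  | succ q =>
      rw [tb_even_succ, tb_xor_pow, tb_xor_pow]
      by_cases h : q + 1 = p
      · rw [if_pos h, if_pos h, tb_even_succ]
      · rw [if_neg h, if_neg h, tb_even_succ]

lemma xor_one_mod_two (i : ℕ) : (i ^^^ 1) % 2 = 1 - i % 2 := by
  have h : (i ^^^ 1).testBit 0 = !(i.testBit 0) := by
    have := tb_xor_pow i 0 0; simpa using this
  rw [mod_two_eq_ite, mod_two_eq_ite i, h]
  cases hb : i.testBit 0 <;> simp

lemma xor_one_even (i : ℕ) : (i ^^^ 1) - (i ^^^ 1) % 2 = i - i % 2 := by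
  apply Nat.eq_of_testBit_eq
  intro q
  cases q with
  | zero => rw [tb_even_zero, tb_even_zero]
  | succ q =>
      rw [tb_even_succ, tb_even_succ]
      have h := tb_xor_pow i 0 (q+1)
      simp only [pow_zero] at h
      rw [h, if_neg (by omega)]

lemma card_toggle {n p : ℕ} (hp : p < n) (P Q : ℕ → Prop) [DecidablePred P] [DecidablePred Q]
    (hagree : ∀ q, q ≠ p → (Q q ↔ P q)) (hq : Q p) (hP : ¬ P p) :
    ((range n).filter Q).card = ((range n).filter P).card + 1 := by
  have hset : (range n).filter Q = insert p ((range n).filter P) := by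
    ext q
    by_cases hqp : q = p
    · subst hqp; simp [hq, hp, hP]
    · simp [mem_insert, hqp, mem_filter, hagree q hqp]
  rw [hset, card_insert_of_notMem (by simp [hP])]

lemma card_same {n p : ℕ} (P Q : ℕ → Prop) [DecidablePred P] [DecidablePred Q]
    (hagree : ∀ q, q ≠ p → (Q q ↔ P q)) (hiff : Q p ↔ P p) :
    ((range n).filter Q).card = ((range n).filter P).card := by
  congr 1
  ext q
  by_cases hqp : q = p
  · subst hqp; simp [mem_filter, hiff]
  · simp [mem_filter, hagree q hqp]

lemma hamD_comm (n i j : ℕ) : hamD n i j = hamD n j i := by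
  unfold hamD; congr 1; ext q; simp [ne_comm]

lemma hamD_toggle_eq {n p : ℕ} (hp : p < n) (i j : ℕ) (h : i.testBit p = j.testBit p) :
    hamD n (i ^^^ 2 ^ p) j = hamD n i j + 1 := by
  apply card_toggle hp
  · intro q hq; rw [tb_xor_pow, if_neg hq]
  · rw [tb_xor_pow, if_pos rfl, h]; cases j.testBit p <;> simp
  · simp [h]

lemma hamD_toggle_ne {n p : ℕ} (hp : p < n) (i j : ℕ) (h : i.testBit p ≠ j.testBit p) :
    hamD n i j = hamD n (i ^^^ 2 ^ p) j + 1 := by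
  apply card_toggle hp
  · intro q hq; rw [tb_xor_pow, if_neg hq]
  · exact h
  · rw [tb_xor_pow, if_pos rfl]
    cases hi : i.testBit p <;> cases hj : j.testBit p <;> simp_all

lemma hamC_toggle_none {n p : ℕ} (hp : p < n) (i j : ℕ) (h : j.testBit p = false) :
    hamC n (i ^^^ 2 ^ p) j = hamC n i j := by
  apply card_same (p := p)
  · intro q hq; rw [tb_xor_pow, if_neg hq]
  · simp [h]

lemma hamC_toggle_add {n p : ℕ} (hp : p < n) (i j : ℕ) (hj : j.testBit p = true)
    (hi : i.testBit p = false) : hamC n (i ^^^ 2 ^ p) j = hamC n i j + 1 := by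
  apply card_toggle hp
  · intro q hq; rw [tb_xor_pow, if_neg hq]
  · rw [tb_xor_pow, if_pos rfl, hi, hj]; simp
  · simp [hi]

lemma hamC_toggle_sub {n p : ℕ} (hp : p < n) (i j : ℕ) (hj : j.testBit p = true)
    (hi : i.testBit p = true) : hamC n i j = hamC n (i ^^^ 2 ^ p) j + 1 := by
  apply card_toggle hp
  · intro q hq; rw [tb_xor_pow, if_neg hq]
  · simp [hi, hj]
  · rw [tb_xor_pow, if_pos rfl, hi]; simp

lemma hamW_toggle_add {n p : ℕ} (hp : p < n) (i : ℕ) (hi : i.testBit p = false) :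
    hamW n (i ^^^ 2 ^ p) = hamW n i + 1 := by
  apply card_toggle hp
  · intro q hq; rw [tb_xor_pow, if_neg hq]
  · rw [tb_xor_pow, if_pos rfl, hi]; simp
  · simp [hi]

lemma hamW_toggle_sub {n p : ℕ} (hp : p < n) (i : ℕ) (hi : i.testBit p = true) :
    hamW n i = hamW n (i ^^^ 2 ^ p) + 1 := by
  apply card_toggle hp
  · intro q hq; rw [tb_xor_pow, if_neg hq]
  · exact hi
  · rw [tb_xor_pow, if_pos rfl, hi]; simp

lemma hamD_self_flip {n p : ℕ} (hp : p < n) (i : ℕ) : hamD n i (i ^^^ 2 ^ p) = 1 := by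
  unfold hamD
  have : (range n).filter (fun q => i.testBit q ≠ (i ^^^ 2 ^ p).testBit q) = {p} := by
    ext q
    simp only [mem_filter, mem_range, mem_singleton, tb_xor_pow]
    constructor
    · rintro ⟨_, hne⟩
      by_contra hqp
      rw [if_neg hqp] at hne; exact hne rfl
    · intro hqp
      refine ⟨hqp ▸ hp, ?_⟩
      rw [if_pos hqp]; cases i.testBit q <;> simp
  rw [this, card_singleton]

lemma hamD_eq_zero {n i j : ℕ} (hi : i < 2 ^ n) (hj : j < 2 ^ n) (h : hamD n i j = 0) : i = j := by
  unfold hamD at h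
  apply Nat.eq_of_testBit_eq
  intro q
  by_cases hq : q < n
  · by_contra hne
    have : q ∈ (range n).filter (fun p => i.testBit p ≠ j.testBit p) := by
      simp [hq, hne]
    have := card_pos.mpr ⟨q, this⟩
    omega
  · have h2 : 2 ^ n ≤ 2 ^ q := Nat.pow_le_pow_right (by norm_num) (by omega)
    rw [Nat.testBit_lt_two_pow (by omega), Nat.testBit_lt_two_pow (by omega)]

lemma hamD_one_exists {n i j : ℕ} (hi : i < 2 ^ n) (hj : j < 2 ^ n) (h : hamD n i j = 1) :
    ∃ p < n, j = i ^^^ 2 ^ p := by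
  obtain ⟨p, hp⟩ := card_eq_one.mp h
  have hpn : p < n := by
    have : p ∈ (range n).filter (fun q => i.testBit q ≠ j.testBit q) := by rw [hp]; simp
    simpa using (mem_filter.mp this).1
  refine ⟨p, hpn, ?_⟩
  have hxor : i ^^^ j = 2 ^ p := by
    apply Nat.eq_of_testBit_eq
    intro q
    rw [Nat.testBit_xor, Nat.testBit_two_pow]
    by_cases hq : q < n
    · have : q ∈ (range n).filter (fun r => i.testBit r ≠ j.testBit r) ↔ q = p := by
        rw [hp]; simp
      simp only [mem_filter, mem_range] at this
      by_cases hqp : p = q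
      · subst hqp
        have := this.mpr rfl
        simp only [hq, true_and] at this
        cases hi2 : i.testBit p <;> cases hj2 : j.testBit p <;> simp_all
      · have hne : ¬ (i.testBit q ≠ j.testBit q) := fun hc => hqp ((this.mp ⟨hq, hc⟩).symm)
        have : i.testBit q = j.testBit q := not_not.mp hne
        simp [this, hqp]
    · have h2 : 2 ^ n ≤ 2 ^ q := Nat.pow_le_pow_right (by norm_num) (by omega)
      rw [Nat.testBit_lt_two_pow (by omega), Nat.testBit_lt_two_pow (by omega)]
      simp; omega
  rw [← hxor, ← Nat.xor_assoc, Nat.xor_self, Nat.zero_xor]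

lemma odd_eq_even_xor_one {i : ℕ} (h : i % 2 = 1) : i = (i - i % 2) ^^^ 1 := by
  apply Nat.eq_of_testBit_eq
  intro q
  cases q with
  | zero =>
      have h00 := tb_xor_pow (i - i % 2) 0 0
      simp only [pow_zero] at h00
      rw [h00]
      simp [tb_even_zero, Nat.testBit_zero, h]
      omega
  | succ q =>
      have h01 := tb_xor_pow (i - i % 2) 0 (q+1)
      simp only [pow_zero] at h01
      rw [h01, if_neg (by omega), tb_even_succ]

lemma hamW_split (n i : ℕ) (hn : 1 ≤ n) : hamW n i = hamW n (i - i % 2) + i % 2 := by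
  rcases Nat.mod_two_eq_zero_or_one i with h | h
  · rw [h]; simp
  · have h2 := hamW_toggle_add (n := n) (p := 0) (by omega) (i - i % 2) (tb_even_zero i)
    simp only [pow_zero] at h2
    rw [← odd_eq_even_xor_one h] at h2
    rw [h] at h2 ⊢
    exact h2

lemma root_rec {x : ℝ} (hx : x ≠ 0) (hsq : x^2 = 2*x + 1) (α : ℤ) :
    x^(α+1) = 2 * x^α + x^(α-1) := by
  rw [zpow_add_one₀ hx, zpow_sub_one₀ hx]
  have h : x = 2 + x⁻¹ := by
    field_simp
    nlinarith [hsq]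
  calc x^α * x = x^α * (2 + x⁻¹) := by rw [← h]
  _ = 2 * x^α + x^α * x⁻¹ := by ring

lemma sqrt2_facts : (Real.sqrt 2)^2 = 2 ∧ Real.sqrt 2 > 1 := by
  constructor
  · exact Real.sq_sqrt (by norm_num)
  · nlinarith [Real.sq_sqrt (show (2:ℝ) ≥ 0 by norm_num), Real.sqrt_nonneg 2]

lemma Ffun_rec (α : ℤ) : Ffun (α+1) = 2 * Ffun α + Ffun (α-1) := by
  obtain ⟨hs, hs1⟩ := sqrt2_facts
  have h1 : (1 + Real.sqrt 2) ≠ 0 := by nlinarith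
  have h2 : (1 - Real.sqrt 2) ≠ 0 := by nlinarith
  have r1 := root_rec h1 (by nlinarith) α
  have r2 := root_rec h2 (by nlinarith) α
  unfold Ffun
  rw [r1, r2]
  ring

noncomputable def Gfun (α : ℤ) : ℝ := Ffun α + Ffun (α - 1)

lemma Ffun_rec' (α : ℤ) : Ffun α = 2 * Ffun (α-1) + Ffun (α-1-1) := by
  have h := Ffun_rec (α-1)
  rwa [show α - 1 + 1 = α by ring] at h

lemma Gfun_rec (α : ℤ) : Gfun (α+1) = 2 * Gfun α + Gfun (α-1) := by
  unfold Gfun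
  rw [show α + 1 - 1 = α by ring]
  have h1 := Ffun_rec α
  have h2 := Ffun_rec' α
  linarith

lemma Gfun_companion (α : ℤ) : Gfun α + Gfun (α-1) = 2 * Ffun α := by
  unfold Gfun
  have h2 := Ffun_rec' α
  linarith

lemma Gfun_eq (α : ℤ) : Gfun α = Ffun α + Ffun (α-1) := rfl


lemma sum_neighbors (n i : ℕ) (hi : i < 2 ^ n) (w : ℕ → ℝ) :
    ∑ j ∈ range (2 ^ n), (if hamD n i j = 1 then w j else 0) = ∑ p ∈ range n, w (i ^^^ 2 ^ p) := by
  rw [← Finset.sum_filter]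
  have himg : (range (2 ^ n)).filter (fun j => hamD n i j = 1)
      = (range n).image (fun p => i ^^^ 2 ^ p) := by
    ext j
    simp only [mem_filter, mem_range, mem_image]
    constructor
    · rintro ⟨hj, hd⟩
      obtain ⟨p, hp, rfl⟩ := hamD_one_exists hi hj hd
      exact ⟨p, hp, rfl⟩
    · rintro ⟨p, hp, rfl⟩
      refine ⟨Nat.xor_lt_two_pow hi (Nat.pow_lt_pow_right (by norm_num) hp), ?_⟩
      exact hamD_self_flip hp i
  rw [himg, Finset.sum_image]
  intro x hx y hy hxy
  have h2 : 2 ^ x = 2 ^ y := by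
    have h3 : i ^^^ (i ^^^ 2 ^ x) = i ^^^ (i ^^^ 2 ^ y) := by rw [show i ^^^ 2 ^ x = i ^^^ 2 ^ y from hxy]
    rwa [← Nat.xor_assoc, ← Nat.xor_assoc, Nat.xor_self, Nat.zero_xor, Nat.zero_xor] at h3
  exact Nat.pow_right_injective (le_refl 2) h2

noncomputable def pf (f : ℤ → ℝ) (n i k : ℕ) : ℝ :=
  (-1 : ℝ) ^ hamC n (i - i % 2) (k - k % 2) *
    f ((hamD n (i - i % 2) (k - k % 2) : ℤ) - 1 + ((i % 2 : ℕ) : ℤ) + ((k % 2 : ℕ) : ℤ))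

/-- the flipped-bit term, `p ≥ 1` -/
lemma flip_term (f : ℤ → ℝ) (hf : ∀ α, f (α+1) = 2 * f α + f (α-1))
    {n p : ℕ} (hp1 : 1 ≤ p) (hpn : p < n) (i k : ℕ) :
    pf f n (i ^^^ 2 ^ p) k =
      (if (k - k % 2).testBit p then (-1:ℝ) else 1) *
        ((-1 : ℝ) ^ hamC n (i - i % 2) (k - k % 2) *
          (f ((hamD n (i - i % 2) (k - k % 2) : ℤ) - 1 + ((i % 2 : ℕ) : ℤ) + ((k % 2 : ℕ) : ℤ) - 1) +
            (if (i - i % 2).testBit p = (k - k % 2).testBit p then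
              2 * f ((hamD n (i - i % 2) (k - k % 2) : ℤ) - 1 + ((i % 2 : ℕ) : ℤ) + ((k % 2 : ℕ) : ℤ)) else 0))) := by
  set i0 := i - i % 2 with hi0
  set k0 := k - k % 2 with hk0
  set c := hamC n i0 k0 with hc
  set d := hamD n i0 k0 with hd
  set α : ℤ := (d : ℤ) - 1 + ((i % 2 : ℕ) : ℤ) + ((k % 2 : ℕ) : ℤ) with hα
  unfold pf
  rw [xor_pow_even i p hp1, xor_mod_two i p hp1, ← hi0, ← hk0]
  by_cases hik : i0.testBit p = k0.testBit p
  · have hD : hamD n (i0 ^^^ 2 ^ p) k0 = d + 1 := hamD_toggle_eq hpn i0 k0 hik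
    have harg : (hamD n (i0 ^^^ 2 ^ p) k0 : ℤ) - 1 + ((i % 2 : ℕ) : ℤ) + ((k % 2 : ℕ) : ℤ) = α + 1 := by
      rw [hD]; push_cast; omega
    rw [harg, if_pos hik, hf α]
    cases hkb : k0.testBit p
    · have hC : hamC n (i0 ^^^ 2 ^ p) k0 = c := hamC_toggle_none hpn i0 k0 hkb
      rw [hC]; simp only [Bool.false_eq_true, if_false]; ring
    · have hib : i0.testBit p = true := by rw [hik, hkb]
      have hC : c = hamC n (i0 ^^^ 2 ^ p) k0 + 1 := hamC_toggle_sub hpn i0 k0 hkb hib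
      have hpow : (-1:ℝ) ^ hamC n (i0 ^^^ 2 ^ p) k0 = -(-1:ℝ)^c := by
        rw [hC, pow_succ]; norm_num
      rw [hpow]; norm_num; ring
  · have hD : d = hamD n (i0 ^^^ 2 ^ p) k0 + 1 := hamD_toggle_ne hpn i0 k0 hik
    have harg : (hamD n (i0 ^^^ 2 ^ p) k0 : ℤ) - 1 + ((i % 2 : ℕ) : ℤ) + ((k % 2 : ℕ) : ℤ) = α - 1 := by
      rw [hα, hD]; push_cast; omega
    rw [harg, if_neg hik]
    cases hkb : k0.testBit p
    · have hC : hamC n (i0 ^^^ 2 ^ p) k0 = c := hamC_toggle_none hpn i0 k0 hkb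
      rw [hC]; simp only [Bool.false_eq_true, if_false]; ring
    · have hib : i0.testBit p = false := by
        cases hib : i0.testBit p
        · rfl
        · exact absurd (by rw [hib, hkb]) hik
      have hC : hamC n (i0 ^^^ 2 ^ p) k0 = c + 1 := hamC_toggle_add hpn i0 k0 hkb hib
      rw [hC, pow_succ]; norm_num

/-- counting sum 1 -/
lemma count_sum1 (n x : ℕ) :
    ∑ p ∈ range n, (if x.testBit p then (-1:ℝ) else 1) = (n : ℝ) - 2 * hamW n x := by
  have hpt : ∀ p, (if x.testBit p then (-1:ℝ) else 1) = 1 - 2 * (if x.testBit p then 1 else 0) := by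
    intro p; cases x.testBit p <;> norm_num
  simp_rw [hpt]
  rw [Finset.sum_sub_distrib, Finset.sum_const, ← Finset.mul_sum, Finset.sum_boole]
  simp [hamW]

/-- counting sum 2 -/
lemma count_sum2 (n x y : ℕ) :
    ∑ p ∈ range n, (if x.testBit p = y.testBit p then (if y.testBit p then (-1:ℝ) else 1) else 0)
      = (n : ℝ) - hamW n x - hamW n y := by
  have hpt : ∀ p, (if x.testBit p = y.testBit p then (if y.testBit p then (-1:ℝ) else 1) else 0)
      = 1 - (if x.testBit p then 1 else 0) - (if y.testBit p then 1 else 0) := by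
    intro p; cases hx : x.testBit p <;> cases hy : y.testBit p <;> norm_num
  simp_rw [hpt]
  rw [Finset.sum_sub_distrib, Finset.sum_sub_distrib, Finset.sum_const,
    Finset.sum_boole, Finset.sum_boole]
  simp [hamW]

lemma key (f g : ℤ → ℝ) (hf : ∀ α, f (α+1) = 2 * f α + f (α-1))
    (hg : ∀ α, g α = f α + f (α-1)) (n : ℕ) (hn : 1 ≤ n) (i k : ℕ) :
    (∑ p ∈ range n, pf f n (i ^^^ 2 ^ p) k) - ((n:ℝ) - 2 * (hamW n i)) * pf f n i k
      = ((n:ℝ) - 2 * (hamW n (k - k % 2))) * pf g n i k := by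
  set i0 := i - i % 2 with hi0
  set k0 := k - k % 2 with hk0
  set c := hamC n i0 k0 with hc
  set d := hamD n i0 k0 with hd
  set α : ℤ := (d : ℤ) - 1 + ((i % 2 : ℕ) : ℤ) + ((k % 2 : ℕ) : ℤ) with hα
  set m := hamW n k0 with hm
  set W0 := hamW n i0 with hW0
  -- split off p = 0
  rw [Finset.range_eq_Ico, Finset.sum_eq_sum_Ico_succ_bot (show 0 < n by omega)]
  -- p = 0 term
  have hp0 : pf f n (i ^^^ 2 ^ 0) k = (-1:ℝ)^c * f ((d : ℤ) - 1 + ((1 - i % 2 : ℕ) : ℤ) + ((k % 2 : ℕ) : ℤ)) := by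
    rw [pow_zero]
    unfold pf
    rw [xor_one_even, xor_one_mod_two]
  rw [hp0]
  -- rewrite the Ico sum pointwise
  have hsum : ∀ p ∈ Finset.Ico 1 n, pf f n (i ^^^ 2 ^ p) k
      = (-1:ℝ)^c * f (α - 1) * (if k0.testBit p then (-1:ℝ) else 1)
        + ((-1:ℝ)^c * (2 * f α)) *
            (if i0.testBit p = k0.testBit p then (if k0.testBit p then (-1:ℝ) else 1) else 0) := by
    intro p hp
    rw [flip_term f hf (mem_Ico.mp hp).1 (mem_Ico.mp hp).2 i k]
    by_cases h : i0.testBit p = k0.testBit p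
    · rw [if_pos h, if_pos h]; ring
    · rw [if_neg h, if_neg h]; ring
  rw [Finset.sum_congr rfl hsum, Finset.sum_add_distrib, ← Finset.mul_sum, ← Finset.mul_sum]
  -- evaluate the two counting sums over Ico 1 n
  have hσ0 : (if k0.testBit 0 then (-1:ℝ) else 1) = 1 := by
    rw [hk0, tb_even_zero]; simp
  have hIco1 : ∑ p ∈ Finset.Ico 1 n, (if k0.testBit p then (-1:ℝ) else 1) = (n:ℝ) - 2 * m - 1 := by
    have h1 := count_sum1 n k0
    rw [Finset.range_eq_Ico, Finset.sum_eq_sum_Ico_succ_bot (show 0 < n by omega), hσ0] at h1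
    rw [← hm] at h1
    linarith
  have hτ0 : (if i0.testBit 0 = k0.testBit 0 then (if k0.testBit 0 then (-1:ℝ) else 1) else 0) = 1 := by
    rw [hk0, hi0, tb_even_zero, tb_even_zero]; simp
  have hIco2 : ∑ p ∈ Finset.Ico 1 n,
      (if i0.testBit p = k0.testBit p then (if k0.testBit p then (-1:ℝ) else 1) else 0)
        = (n:ℝ) - W0 - m - 1 := by
    have h2 := count_sum2 n i0 k0
    rw [Finset.range_eq_Ico, Finset.sum_eq_sum_Ico_succ_bot (show 0 < n by omega), hτ0] at h2
    rw [← hm, ← hW0] at h2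
    linarith
  rw [hIco1, hIco2]
  -- identify pf at i and the weight split
  have hpfi : pf f n i k = (-1:ℝ)^c * f α := rfl
  have hpgi : pf g n i k = (-1:ℝ)^c * g α := rfl
  rw [hpfi, hpgi, hg α, hamW_split n i hn, ← hi0, ← hW0]
  rcases Nat.mod_two_eq_zero_or_one i with ha | ha
  · have harg : ((d : ℤ) - 1 + ((1 - i % 2 : ℕ) : ℤ) + ((k % 2 : ℕ) : ℤ)) = α + 1 := by
      rw [hα, ha]; push_cast; ring
    rw [harg, hf α, ha]
    push_cast
    ring
  · have harg : ((d : ℤ) - 1 + ((1 - i % 2 : ℕ) : ℤ) + ((k % 2 : ℕ) : ℤ)) = α - 1 := by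
      rw [hα, ha]; push_cast; ring
    rw [harg, ha]
    push_cast
    ring

def Mval (n i j : ℕ) : ℝ :=
  (if hamD n i j = 1 then 1 else 0) - (if i = j then (n:ℝ) - 2 * (hamW n i) else 0)

noncomputable def Bval (n i j : ℕ) : ℝ :=
  if i = j then
    (n : ℝ) * ((n : ℝ) - 1) + (1 / 2) * ((n : ℝ) - (2 * (hamW n i : ℝ) - (n : ℝ)) ^ 2)
  else
    (if hamD n i j = 1 then (n : ℝ) - 1 - 2 * (min (hamW n i) (hamW n j) : ℝ) else 0)
      - (if hamD n i j = 2 then 1 else 0)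

lemma Msum (n i : ℕ) (hi : i < 2 ^ n) (v : ℕ → ℝ) :
    ∑ j ∈ range (2 ^ n), Mval n i j * v j
      = (∑ p ∈ range n, v (i ^^^ 2 ^ p)) - ((n:ℝ) - 2 * (hamW n i)) * v i := by
  have h1 : ∑ j ∈ range (2 ^ n), (if hamD n i j = 1 then (1:ℝ) else 0) * v j
      = ∑ p ∈ range n, v (i ^^^ 2 ^ p) := by
    simp_rw [ite_mul, one_mul, zero_mul]
    exact sum_neighbors n i hi v
  have h2 : ∑ j ∈ range (2 ^ n), (if i = j then (n:ℝ) - 2 * (hamW n i) else 0) * v j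
      = ((n:ℝ) - 2 * (hamW n i)) * v i := by
    simp_rw [ite_mul, zero_mul]
    rw [Finset.sum_ite_eq (range (2 ^ n)) i (fun j => ((n:ℝ) - 2 * (hamW n i)) * v j),
      if_pos (mem_range.mpr hi)]
  have h3 : ∀ j, Mval n i j * v j
      = (if hamD n i j = 1 then (1:ℝ) else 0) * v j
        - (if i = j then (n:ℝ) - 2 * (hamW n i) else 0) * v j := by
    intro j; unfold Mval; ring
  simp_rw [h3]
  rw [Finset.sum_sub_distrib, h1, h2]

lemma xsq_count (n i j : ℕ) (hi : i < 2 ^ n) (hj : j < 2 ^ n) :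
    ∑ l ∈ range (2 ^ n), (if hamD n i l = 1 then (1:ℝ) else 0) * (if hamD n l j = 1 then (1:ℝ) else 0)
      = if i = j then (n : ℝ) else if hamD n i j = 2 then 2 else 0 := by
  simp_rw [ite_mul, one_mul, zero_mul]
  rw [sum_neighbors n i hi (fun l => if hamD n l j = 1 then (1:ℝ) else 0)]
  by_cases hij : i = j
  · subst hij
    rw [if_pos rfl]
    rw [Finset.sum_congr rfl (fun p hp => by
      rw [hamD_comm, hamD_self_flip (mem_range.mp hp) i, if_pos rfl])]
    simp
  · rw [if_neg hij]
    have he0 : hamD n i j ≠ 0 := fun h => hij (hamD_eq_zero hi hj h)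
    have hpt : ∀ p ∈ range n, (if hamD n (i ^^^ 2 ^ p) j = 1 then (1:ℝ) else 0)
        = if hamD n i j = 2 ∧ i.testBit p ≠ j.testBit p then 1 else 0 := by
      intro p hp
      by_cases hb : i.testBit p = j.testBit p
      · rw [hamD_toggle_eq (mem_range.mp hp) i j hb, if_neg (by omega),
          if_neg (by tauto)]
      · have h2 := hamD_toggle_ne (mem_range.mp hp) i j hb
        by_cases he2 : hamD n i j = 2
        · rw [if_pos (by omega), if_pos ⟨he2, hb⟩]
        · rw [if_neg (by omega), if_neg (by tauto)]
    rw [Finset.sum_congr rfl hpt]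
    by_cases he2 : hamD n i j = 2
    · rw [if_pos he2]
      have : ∀ p ∈ range n, (if hamD n i j = 2 ∧ i.testBit p ≠ j.testBit p then (1:ℝ) else 0)
          = if i.testBit p ≠ j.testBit p then 1 else 0 := by
        intro p _
        by_cases hb : i.testBit p ≠ j.testBit p
        · rw [if_pos ⟨he2, hb⟩, if_pos hb]
        · rw [if_neg (by tauto), if_neg hb]
      rw [Finset.sum_congr rfl this, Finset.sum_boole]
      have : ((range n).filter (fun p => i.testBit p ≠ j.testBit p)).card = 2 := he2
      rw [this]; norm_num
    · rw [if_neg he2]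
      rw [Finset.sum_congr rfl (fun p _ => by rw [if_neg (by tauto)])]
      simp

lemma wdist1 (n i j : ℕ) (hi : i < 2 ^ n) (hj : j < 2 ^ n) (h : hamD n i j = 1) :
    hamW n i + hamW n j = 2 * min (hamW n i) (hamW n j) + 1 := by
  obtain ⟨p, hp, rfl⟩ := hamD_one_exists hi hj h
  cases hb : i.testBit p
  · have := hamW_toggle_add hp i hb
    omega
  · have := hamW_toggle_sub hp i hb
    omega

lemma Bexp (n i j : ℕ) (hi : i < 2 ^ n) (hj : j < 2 ^ n) :
    Bval n i j = (if i = j then ((n:ℝ))^2 else 0)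
      - (1/2) * ∑ l ∈ range (2 ^ n), Mval n i l * Mval n l j := by
  have expand : ∀ l, Mval n i l * Mval n l j
      = (if hamD n i l = 1 then (1:ℝ) else 0) * (if hamD n l j = 1 then (1:ℝ) else 0)
        - (if l = j then (if hamD n i l = 1 then (1:ℝ) else 0) * ((n:ℝ) - 2 * (hamW n l)) else 0)
        - (if i = l then ((n:ℝ) - 2 * (hamW n i)) * (if hamD n l j = 1 then (1:ℝ) else 0) else 0)
        + (if i = l then ((n:ℝ) - 2 * (hamW n i)) * (if l = j then ((n:ℝ) - 2 * (hamW n l)) else 0) else 0) := by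
    intro l
    unfold Mval
    by_cases h1 : i = l <;> by_cases h2 : l = j
    · simp only [if_pos h1, if_pos h2]; ring
    · simp only [if_pos h1, if_neg h2]; ring
    · simp only [if_neg h1, if_pos h2]; ring
    · simp only [if_neg h1, if_neg h2]; ring
  simp_rw [expand]
  rw [Finset.sum_add_distrib, Finset.sum_sub_distrib, Finset.sum_sub_distrib]
  rw [xsq_count n i j hi hj]
  rw [Finset.sum_ite_eq' (range (2 ^ n)) j
      (fun l => (if hamD n i l = 1 then (1:ℝ) else 0) * ((n:ℝ) - 2 * (hamW n l))),
    if_pos (mem_range.mpr hj)]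
  rw [Finset.sum_ite_eq (range (2 ^ n)) i
      (fun l => ((n:ℝ) - 2 * (hamW n i)) * (if hamD n l j = 1 then (1:ℝ) else 0)),
    if_pos (mem_range.mpr hi)]
  rw [Finset.sum_ite_eq (range (2 ^ n)) i
      (fun l => ((n:ℝ) - 2 * (hamW n i)) * (if l = j then ((n:ℝ) - 2 * (hamW n l)) else 0)),
    if_pos (mem_range.mpr hi)]
  unfold Bval
  by_cases hij : i = j
  · subst hij
    have hdd : hamD n i i = 0 := by
      unfold hamD
      rw [Finset.filter_false_of_mem (fun p _ => by simp)]
      rfl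
    simp only [hdd, if_pos rfl]
    norm_num
    push_cast
    ring
  · by_cases hd1 : hamD n i j = 1
    · simp only [if_neg hij, if_pos hd1, hd1]
      norm_num
      have hw := wdist1 n i j hi hj hd1
      rcases le_total (hamW n i) (hamW n j) with hle | hle
      · rw [min_eq_left hle] at hw
        rw [min_eq_left (show ((hamW n i : ℝ)) ≤ ((hamW n j : ℝ)) by exact_mod_cast hle)]
        have hwr : (hamW n i : ℝ) + (hamW n j : ℝ) = 2 * (hamW n i : ℝ) + 1 := by
          exact_mod_cast hw
        linarith
      · rw [min_eq_right hle] at hw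
        rw [min_eq_right (show ((hamW n j : ℝ)) ≤ ((hamW n i : ℝ)) by exact_mod_cast hle)]
        have hwr : (hamW n i : ℝ) + (hamW n j : ℝ) = 2 * (hamW n j : ℝ) + 1 := by
          exact_mod_cast hw
        linarith
    · simp only [if_neg hij, if_neg hd1]
      by_cases hd2 : hamD n i j = 2
      · simp only [if_pos hd2]; ring
      · simp only [if_neg hd2]; ring

lemma main_nat (n : ℕ) (hn : 1 ≤ n) (i k : ℕ) (hi : i < 2 ^ n) :
    ∑ j ∈ range (2 ^ n), Bval n i j * pf Ffun n j k
      = 4 * (hamW n (k - k % 2) : ℝ) * ((n:ℝ) - (hamW n (k - k % 2))) * pf Ffun n i k := by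
  have stepB : ∀ l, l < 2 ^ n → ∑ j ∈ range (2 ^ n), Mval n l j * pf Ffun n j k
      = ((n:ℝ) - 2 * (hamW n (k - k % 2))) * pf Gfun n l k := by
    intro l hl
    rw [Msum n l hl (fun j => pf Ffun n j k)]
    exact key Ffun Gfun Ffun_rec (fun α => rfl) n hn l k
  have stepC : ∑ j ∈ range (2 ^ n), Mval n i j * pf Gfun n j k
      = ((n:ℝ) - 2 * (hamW n (k - k % 2))) * (2 * pf Ffun n i k) := by
    rw [Msum n i hi (fun j => pf Gfun n j k)]
    have h2 := key Gfun (fun α => 2 * Ffun α) Gfun_rec (fun α => (Gfun_companion α).symm) n hn i k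
    rw [h2]
    have hpf2 : pf (fun α => 2 * Ffun α) n i k = 2 * pf Ffun n i k := by
      unfold pf; ring
    rw [hpf2]
  have hB : ∀ j ∈ range (2 ^ n), Bval n i j * pf Ffun n j k
      = (if i = j then ((n:ℝ))^2 * pf Ffun n j k else 0)
        - (1/2) * ((∑ l ∈ range (2 ^ n), Mval n i l * Mval n l j) * pf Ffun n j k) := by
    intro j hj
    rw [Bexp n i j hi (mem_range.mp hj)]
    by_cases h : i = j
    · rw [if_pos h, if_pos h]; ring
    · rw [if_neg h, if_neg h]; ring
  rw [Finset.sum_congr rfl hB, Finset.sum_sub_distrib]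
  rw [Finset.sum_ite_eq (range (2 ^ n)) i (fun j => ((n:ℝ))^2 * pf Ffun n j k),
    if_pos (mem_range.mpr hi)]
  have hdouble : ∑ j ∈ range (2 ^ n), (1/2) * ((∑ l ∈ range (2 ^ n), Mval n i l * Mval n l j) * pf Ffun n j k)
      = (1/2) * (((n:ℝ) - 2 * (hamW n (k - k % 2)))
          * (((n:ℝ) - 2 * (hamW n (k - k % 2))) * (2 * pf Ffun n i k))) := by
    have h1 : ∀ j ∈ range (2 ^ n),
        (1/2) * ((∑ l ∈ range (2 ^ n), Mval n i l * Mval n l j) * pf Ffun n j k)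
          = ∑ l ∈ range (2 ^ n), (1/2) * (Mval n i l * (Mval n l j * pf Ffun n j k)) := by
      intro j _
      rw [Finset.sum_mul, Finset.mul_sum]
      exact Finset.sum_congr rfl (fun l _ => by ring)
    rw [Finset.sum_congr rfl h1, Finset.sum_comm]
    have h2 : ∀ l ∈ range (2 ^ n),
        ∑ j ∈ range (2 ^ n), (1/2) * (Mval n i l * (Mval n l j * pf Ffun n j k))
          = (1/2) * (Mval n i l * (((n:ℝ) - 2 * (hamW n (k - k % 2))) * pf Gfun n l k)) := by
      intro l hl
      rw [← Finset.mul_sum, ← Finset.mul_sum, stepB l (mem_range.mp hl)]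
    rw [Finset.sum_congr rfl h2]
    have h3 : ∀ l ∈ range (2 ^ n),
        (1/2) * (Mval n i l * (((n:ℝ) - 2 * (hamW n (k - k % 2))) * pf Gfun n l k))
          = ((1/2) * ((n:ℝ) - 2 * (hamW n (k - k % 2)))) * (Mval n i l * pf Gfun n l k) := by
      intro l _; ring
    rw [Finset.sum_congr rfl h3, ← Finset.mul_sum, stepC]
    ring
  rw [hdouble]
  ring

/-- Each column of `P` is an eigenvector of `B` with eigenvalue `4 W(k₀)(n − W(k₀))`,
where `k₀` is `k` with the last bit cleared. -/
theorem stmt0 (n : ℕ) (hn : 2 ≤ n) (k i : Fin (2 ^ n)) :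
    ∑ j : Fin (2 ^ n), Bmat n i j * Pmat n j k =
      4 * (hamW n ((k : ℕ) - (k : ℕ) % 2) : ℝ) *
        ((n : ℝ) - (hamW n ((k : ℕ) - (k : ℕ) % 2) : ℝ)) * Pmat n i k := by
  have hBP : ∀ (a b : Fin (2 ^ n)), Bmat n a b = Bval n ↑a ↑b := by
    intro a b
    unfold Bmat Bval
    by_cases h : a = b
    · subst h; rw [if_pos rfl, if_pos rfl]
    · rw [if_neg h, if_neg (fun hh => h (Fin.ext hh))]
  have hPP : ∀ (a b : Fin (2 ^ n)), Pmat n a b = pf Ffun n ↑a ↑b := by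
    intro a b
    unfold Pmat pf
    first
      | rfl
      | (congr 1; push_cast; ring)
  have hmain := main_nat n (by omega) ↑i ↑k i.isLt
  calc ∑ j : Fin (2 ^ n), Bmat n i j * Pmat n j k
      = ∑ j : Fin (2 ^ n), Bval n ↑i ↑j * pf Ffun n ↑j ↑k :=
        Finset.sum_congr rfl (fun j _ => by rw [hBP, hPP])
    _ = ∑ j ∈ range (2 ^ n), Bval n ↑i j * pf Ffun n j ↑k :=
        Fin.sum_univ_eq_sum_range (fun j => Bval n ↑i j * pf Ffun n j ↑k) (2 ^ n)
    _ = 4 * (hamW n ((k:ℕ) - (k:ℕ) % 2) : ℝ) * ((n : ℝ) - (hamW n ((k:ℕ) - (k:ℕ) % 2) : ℝ))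
          * pf Ffun n ↑i ↑k := hmain
    _ = 4 * (hamW n ((k:ℕ) - (k:ℕ) % 2) : ℝ) * ((n : ℝ) - (hamW n ((k:ℕ) - (k:ℕ) % 2) : ℝ))
          * Pmat n i k := by rw [hPP]

end EigenAux
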